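/- FDR control (Theorem 2): Under conditions (D1)–(D4) for the multiple decision process Δ and conditions (A1)–(A4) for the multiple decision size function A, for every probability measure P and every q ∈ [0,1], the multiple decision function δ*(q) = (δ_m(A_m(α*(q))) : m ∈ 𝓜) satisfies E_P[F(α*(q))] ≤ q; that is, the false discovery rate is at most q. -/

import Mathlib

/-!
Statement 1 (Peña–Habiger–Wu, Theorem 2): FDR control.
Under (D1)–(D4) for the multiple decision process Δ = (δ_m) and (A1)–(A4) for the
multiple decision size function A = (A_m), for every probability measure P and every
q ∈ [0,1], E_P[F(α*(q))] ≤ q.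
-/

open MeasureTheory ProbabilityTheory Function Set

noncomputable section

/-- The number of false discoveries `S₀(α) = ∑_{m ∈ 𝓜₀} δ_m(A_m(α))`. -/
def Szero {X ι : Type*} [Fintype ι] (M0 : Finset ι) (A : ι → ℝ → ℝ)
    (δ : ι → ℝ → X → ℝ) (α : ℝ) (x : X) : ℝ :=
  ∑ m ∈ M0, δ m (A m α) x

/-- The total number of discoveries `S(α) = ∑_{m ∈ 𝓜} δ_m(A_m(α))`. -/
def Stot {X ι : Type*} [Fintype ι] (A : ι → ℝ → ℝ)
    (δ : ι → ℝ → X → ℝ) (α : ℝ) (x : X) : ℝ :=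
  ∑ m, δ m (A m α) x

/-- The false discovery proportion `F(α) = (S₀(α)/S(α))·I{S(α) > 0}` (with `0/0 = 0`). -/
def Fprop {X ι : Type*} [Fintype ι] (M0 : Finset ι) (A : ι → ℝ → ℝ)
    (δ : ι → ℝ → X → ℝ) (α : ℝ) (x : X) : ℝ :=
  if 0 < Stot A δ α x then Szero M0 A δ α x / Stot A δ α x else 0

/-- The last crossing time `α*(q) = sup {α ∈ [0,1] : ∑_m A_m(α) ≤ q·S(α)}`. -/
def alphaStar {X ι : Type*} [Fintype ι] (A : ι → ℝ → ℝ)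
    (δ : ι → ℝ → X → ℝ) (q : ℝ) (x : X) : ℝ :=
  sSup (insert 0 {α ∈ Set.Icc (0:ℝ) 1 | ∑ m, A m α ≤ q * Stot A δ α x})

/-- The σ-algebra generated by the decision process `α ↦ δ_m(α)`, `α ∈ [0,1]`. -/
def procSigma {X : Type*} (δm : ℝ → X → ℝ) : MeasurableSpace X :=
  ⨆ α ∈ Set.Icc (0:ℝ) 1, MeasurableSpace.comap (δm α) Real.measurableSpace

/-- Grouping lemma: from `Indep a b` and `Indep (a ⊔ b) c`, deduce `Indep a (b ⊔ c)`. -/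
lemma indep_group' {X : Type*} [mX : MeasurableSpace X] (P : Measure X) [IsProbabilityMeasure P]
    {a b c : MeasurableSpace X} (ha : a ≤ mX) (hb : b ≤ mX) (hc : c ≤ mX)
    (hab : Indep a b P) (habc : Indep (a ⊔ b) c P) : Indep a (b ⊔ c) P := by
  set p2 : Set (Set X) := {s | ∃ B C, MeasurableSet[b] B ∧ MeasurableSet[c] C ∧ s = B ∩ C}
    with hp2def
  have hgen2 : b ⊔ c = MeasurableSpace.generateFrom p2 := by
    apply le_antisymm
    · apply sup_le
      · intro s hs
        exact MeasurableSpace.measurableSet_generateFrom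
          ⟨s, Set.univ, hs, MeasurableSet.univ, by simp⟩
      · intro s hs
        exact MeasurableSpace.measurableSet_generateFrom
          ⟨Set.univ, s, MeasurableSet.univ, hs, by simp⟩
    · rw [MeasurableSpace.generateFrom_le_iff]
      rintro s ⟨B, C, hB, hC, rfl⟩
      exact MeasurableSet.inter (le_sup_left (α := MeasurableSpace X) B hB)
        (le_sup_right (α := MeasurableSpace X) C hC)
  have hpi2 : IsPiSystem p2 := by
    rintro s ⟨B1, C1, hB1, hC1, rfl⟩ t ⟨B2, C2, hB2, hC2, rfl⟩ -
    exact ⟨B1 ∩ B2, C1 ∩ C2, hB1.inter hB2, hC1.inter hC2, by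
      ext x; simp only [Set.mem_inter_iff]; tauto⟩
  have hpi1 : IsPiSystem {s | MeasurableSet[a] s} := fun s hs t ht _ => hs.inter ht
  refine IndepSets.indep ha (sup_le hb hc) hpi1 hpi2 ?_ hgen2 ?_
  · exact (@MeasurableSpace.generateFrom_measurableSet X a).symm
  · rw [IndepSets_iff]
    rintro s t hs ⟨B, C, hB, hC, rfl⟩
    rw [Indep_iff] at hab habc
    have h1 : P (s ∩ (B ∩ C)) = P (s ∩ B) * P C := by
      rw [← Set.inter_assoc]
      exact habc _ _ (MeasurableSet.inter (le_sup_left (α := MeasurableSpace X) s hs)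
        (le_sup_right (α := MeasurableSpace X) B hB)) hC
    have h2 : P (B ∩ C) = P B * P C :=
      habc _ _ (le_sup_right (α := MeasurableSpace X) B hB) hC
    rw [h1, hab s B hs hB, h2]; ring

set_option maxHeartbeats 2000000 in
/-- **Theorem 2 (FDR control).** -/
theorem fdr_control
    {X ι : Type*} [MeasurableSpace X] [Fintype ι] [DecidableEq ι] [Nonempty ι]
    (P : Measure X) [IsProbabilityMeasure P]
    -- the partition 𝓜 = 𝓜₀(P) ∪ 𝓜₁(P)
    (M0 M1 : Finset ι) (hpart : M0 ∪ M1 = Finset.univ) (hdisj : Disjoint M0 M1)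
    -- the multiple decision process Δ and the size function A
    (δ : ι → ℝ → X → ℝ) (A : ι → ℝ → ℝ)
    (hmeas : ∀ m, ∀ α ∈ Set.Icc (0:ℝ) 1, Measurable (δ m α))
    (hvals : ∀ m, ∀ α ∈ Set.Icc (0:ℝ) 1, ∀ x, δ m α x = 0 ∨ δ m α x = 1)
    -- (D1)
    (hD1 : ∀ m, ∀ᵐ x ∂P, δ m 0 x = 0 ∧ δ m 1 x = 1)
    -- (D2): nondecreasing right-continuous {0,1}-valued paths
    (hD2 : ∀ᵐ x ∂P, ∀ m, MonotoneOn (fun α => δ m α x) (Set.Icc 0 1) ∧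
      ∀ α ∈ Set.Ico (0:ℝ) 1, ContinuousWithinAt (fun β => δ m β x) (Set.Ici α) α)
    -- (D3)
    (hD3a : Indep (⨆ m ∈ M0, procSigma (δ m)) (⨆ m ∈ M1, procSigma (δ m)) P)
    (hD3b : iIndep (fun m : {m // m ∈ M0} => procSigma (δ (m : ι))) P)
    -- (D4): each null decision function has exact size α
    (hD4 : ∀ m ∈ M0, ∀ α ∈ Set.Icc (0:ℝ) 1, ∫ x, δ m α x ∂P = α)
    -- (A1)–(A4)
    (hArange : ∀ m, ∀ α ∈ Set.Icc (0:ℝ) 1, A m α ∈ Set.Icc (0:ℝ) 1)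
    (hA1 : ∀ m, A m 0 = 0 ∧ A m 1 = 1)
    (hA2 : ∀ m, ContinuousOn (A m) (Set.Icc 0 1) ∧ StrictMonoOn (A m) (Set.Icc 0 1))
    (hA3 : ∀ α ∈ Set.Icc (0:ℝ) 1, 1 - α ≤ ∏ m, (1 - A m α))
    (hA4 : ∀ α ∈ Set.Icc (0:ℝ) 1, ∀ m ∈ M0, (M0.card : ℝ) * A m α ≤ ∑ m', A m' α)
    (q : ℝ) (hq : q ∈ Set.Icc (0:ℝ) 1) :
    ∫ x, Fprop M0 A δ (alphaStar A δ q x) x ∂P ≤ q := by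
  classical
  obtain ⟨hq0, hq1⟩ := hq
  have h01 : (0:ℝ) ∈ Set.Icc (0:ℝ) 1 := by norm_num
  set n := Fintype.card ι with hn
  -- basic value facts
  have hδ01 : ∀ m, ∀ α ∈ Set.Icc (0:ℝ) 1, ∀ x, 0 ≤ δ m α x ∧ δ m α x ≤ 1 := by
    intro m α hα x; rcases hvals m α hα x with h | h <;> simp [h]
  set SA : ℝ → ℝ := fun α => ∑ m, A m α with hSAdef
  have hSA0 : SA 0 = 0 := by
    simp only [hSAdef]
    exact Finset.sum_eq_zero fun m _ => (hA1 m).1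
  have hSAnonneg : ∀ α ∈ Set.Icc (0:ℝ) 1, 0 ≤ SA α :=
    fun α hα => Finset.sum_nonneg fun m _ => (hArange m α hα).1
  have hSApos : ∀ α ∈ Set.Icc (0:ℝ) 1, 0 < α → 0 < SA α := by
    intro α hα h0
    have h := Finset.sum_lt_sum_of_nonempty Finset.univ_nonempty
      (f := fun m => A m 0) (g := fun m => A m α)
      (fun m _ => (hA2 m).2 h01 hα h0)
    have h0' : (∑ m, A m 0) = 0 := Finset.sum_eq_zero fun m _ => (hA1 m).1
    rw [h0'] at h
    exact h
  have hSAcont : ContinuousOn SA (Set.Icc 0 1) :=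
    continuousOn_finset_sum _ fun m _ => (hA2 m).1
  -- deterministic thresholds
  set c : ℕ → ℝ := fun k => sSup {α ∈ Set.Icc (0:ℝ) 1 | SA α ≤ q * (k:ℝ)} with hcdef
  have hcbdd : ∀ k : ℕ, BddAbove {α ∈ Set.Icc (0:ℝ) 1 | SA α ≤ q * (k:ℝ)} :=
    fun k => ⟨1, fun a ha => ha.1.2⟩
  have hc0mem : ∀ k : ℕ, (0:ℝ) ∈ {α ∈ Set.Icc (0:ℝ) 1 | SA α ≤ q * (k:ℝ)} := by
    intro k
    refine ⟨h01, ?_⟩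
    rw [hSA0]
    positivity
  have hcmem : ∀ k : ℕ, c k ∈ Set.Icc (0:ℝ) 1 ∧ SA (c k) ≤ q * (k:ℝ) := by
    intro k
    have hclosed : IsClosed {α ∈ Set.Icc (0:ℝ) 1 | SA α ≤ q * (k:ℝ)} := by
      have heq : {α ∈ Set.Icc (0:ℝ) 1 | SA α ≤ q * (k:ℝ)}
          = Set.Icc (0:ℝ) 1 ∩ SA ⁻¹' (Set.Iic (q*(k:ℝ))) := rfl
      rw [heq]
      exact hSAcont.preimage_isClosed_of_isClosed isClosed_Icc isClosed_Iic
    have := hclosed.csSup_mem ⟨0, hc0mem k⟩ (hcbdd k)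
    exact ⟨this.1, this.2⟩
  have hcub : ∀ k : ℕ, ∀ α ∈ Set.Icc (0:ℝ) 1, SA α ≤ q * (k:ℝ) → α ≤ c k :=
    fun k α hα h => le_csSup (hcbdd k) ⟨hα, h⟩
  have hcmono : ∀ j k : ℕ, j ≤ k → c j ≤ c k := by
    intro j k hjk
    refine hcub k _ (hcmem j).1 (le_trans (hcmem j).2 ?_)
    exact mul_le_mul_of_nonneg_left (Nat.cast_le.2 hjk) hq0
  have hApos : ∀ m, ∀ k : ℕ, 0 < c k → 0 < A m (c k) := by
    intro m k h
    have := (hA2 m).2 h01 (hcmem k).1 h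
    rwa [(hA1 m).1] at this
  have hAmc_Icc : ∀ m, ∀ k : ℕ, A m (c k) ∈ Set.Icc (0:ℝ) 1 := fun m k => hArange m _ (hcmem k).1
  -- random quantities
  set S' : ι → ℕ → X → ℝ := fun m k x => ∑ m' ∈ Finset.univ.erase m, δ m' (A m' (c k)) x
    with hS'def
  set Q : X → Finset ℕ :=
    fun x => (Finset.range (n+1)).filter (fun k => (k:ℝ) ≤ Stot A δ (c k) x) with hQdef
  set Q' : ι → X → Finset ℕ :=
    fun m x => (Finset.range (n+1)).filter (fun k => (k:ℝ) ≤ S' m k x + 1) with hQ'def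
  have hStot_nonneg : ∀ (k : ℕ) x, 0 ≤ Stot A δ (c k) x :=
    fun k x => Finset.sum_nonneg fun m _ => (hδ01 m _ (hAmc_Icc m k) x).1
  have hS'nonneg : ∀ m (k : ℕ) x, 0 ≤ S' m k x :=
    fun m k x => Finset.sum_nonneg fun m' _ => (hδ01 m' _ (hAmc_Icc m' k) x).1
  have hQne : ∀ x, (Q x).Nonempty := by
    intro x
    refine ⟨0, Finset.mem_filter.2 ⟨Finset.mem_range.2 (Nat.succ_pos n), ?_⟩⟩
    simpa using hStot_nonneg 0 x
  have hQ'ne : ∀ m x, (Q' m x).Nonempty := by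
    intro m x
    refine ⟨0, Finset.mem_filter.2 ⟨Finset.mem_range.2 (Nat.succ_pos n), ?_⟩⟩
    have := hS'nonneg m 0 x
    push_cast
    linarith
  set K : X → ℕ := fun x => (Q x).max' (hQne x) with hKdef
  set K' : ι → X → ℕ := fun m x => (Q' m x).max' (hQ'ne m x) with hK'def
  have hKmem : ∀ x, K x ∈ Q x := fun x => Finset.max'_mem _ _
  -- the good event
  set G : Set X := {x | (∀ m, MonotoneOn (fun α => δ m α x) (Set.Icc 0 1)) ∧
    ∀ m, δ m 0 x = 0} with hGdef
  have hGae : ∀ᵐ x ∂P, x ∈ G := by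
    have h1 : ∀ᵐ x ∂P, ∀ m, δ m 0 x = 0 :=
      (ae_all_iff).2 fun m => (hD1 m).mono fun x h => h.1
    filter_upwards [hD2, h1] with x h2 h1
    exact ⟨fun m => (h2 m).1, h1⟩
  have hterm_mono : ∀ x ∈ G, ∀ m', ∀ α ∈ Set.Icc (0:ℝ) 1, ∀ β ∈ Set.Icc (0:ℝ) 1,
      α ≤ β → δ m' (A m' α) x ≤ δ m' (A m' β) x := by
    intro x hx m' α hα β hβ hab
    exact (hx.1 m') (hArange m' α hα) (hArange m' β hβ) ((hA2 m').2.monotoneOn hα hβ hab)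
  -- the last crossing time equals c (K x)
  have hstar : ∀ x ∈ G, alphaStar A δ q x = c (K x) := by
    intro x hx
    have hub : ∀ β ∈ insert (0:ℝ) {α ∈ Set.Icc (0:ℝ) 1 | ∑ m, A m α ≤ q * Stot A δ α x},
        β ≤ c (K x) := by
      intro β hβ
      rcases Set.mem_insert_iff.1 hβ with rfl | hβ
      · exact (hcmem (K x)).1.1
      · obtain ⟨hβI, hβle⟩ := hβ
        set k : ℕ := (Finset.univ.filter (fun m => δ m (A m β) x = 1)).card with hkdef
        have hkn : k ∈ Finset.range (n+1) := by
          refine Finset.mem_range.2 (Nat.lt_succ_of_le ?_)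
          calc k ≤ Finset.univ.card := Finset.card_filter_le _ _
          _ = n := Finset.card_univ
        have hSk : Stot A δ β x = (k:ℝ) := by
          have hterm : ∀ m ∈ Finset.univ, δ m (A m β) x
              = if δ m (A m β) x = 1 then (1:ℝ) else 0 := by
            intro m _
            rcases hvals m _ (hArange m β hβI) x with h | h <;> simp [h]
          rw [Stot, Finset.sum_congr rfl hterm, Finset.sum_boole, hkdef]
        have hβck : β ≤ c k := by
          refine hcub k β hβI ?_
          rw [← hSk]
          exact hβle
        have hkQ : k ∈ Q x := by
          refine Finset.mem_filter.2 ⟨hkn, ?_⟩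
          calc (k:ℝ) = Stot A δ β x := hSk.symm
          _ ≤ Stot A δ (c k) x :=
            Finset.sum_le_sum fun m _ => hterm_mono x hx m β hβI (c k) (hcmem k).1 hβck
        exact hβck.trans (hcmono k (K x) (Finset.le_max' _ _ hkQ))
    refine le_antisymm (csSup_le (Set.insert_nonempty _ _) hub) (le_csSup ⟨c (K x), hub⟩ ?_)
    refine Set.mem_insert_iff.2 (Or.inr ⟨(hcmem (K x)).1, ?_⟩)
    calc (∑ m, A m (c (K x))) = SA (c (K x)) := rfl
    _ ≤ q * (K x : ℝ) := (hcmem (K x)).2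
    _ ≤ q * Stot A δ (c (K x)) x :=
      mul_le_mul_of_nonneg_left (Finset.mem_filter.1 (hKmem x)).2 hq0
  -- leave-one-out
  have hQsubQ' : ∀ m x, Q x ⊆ Q' m x := by
    intro m x k hk
    obtain ⟨hkr, hkS⟩ := Finset.mem_filter.1 hk
    refine Finset.mem_filter.2 ⟨hkr, ?_⟩
    have hsplit : δ m (A m (c k)) x + S' m k x = Stot A δ (c k) x := by
      simp only [hS'def, Stot]
      exact Finset.add_sum_erase _ (fun m' => δ m' (A m' (c k)) x) (Finset.mem_univ m)
    have hle1 : δ m (A m (c k)) x ≤ 1 := (hδ01 m _ (hAmc_Icc m k) x).2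
    linarith
  have hL1 : ∀ x ∈ G, ∀ m, δ m (A m (c (K x))) x = 1 → K' m x = K x := by
    intro x hx m hδ1
    have hKK' : K x ≤ K' m x := Finset.le_max' _ _ (hQsubQ' m x (hKmem x))
    refine le_antisymm ?_ hKK'
    have hK'Q' : K' m x ∈ Q' m x := Finset.max'_mem _ _
    obtain ⟨hr, hS'le⟩ := Finset.mem_filter.1 hK'Q'
    have hδ1' : δ m (A m (c (K' m x))) x = 1 := by
      have hmono := hterm_mono x hx m (c (K x)) (hcmem _).1 (c (K' m x)) (hcmem _).1
        (hcmono _ _ hKK')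
      have hle1 := (hδ01 m _ (hAmc_Icc m (K' m x)) x).2
      rw [hδ1] at hmono
      linarith
    have hKS : (K' m x : ℝ) ≤ Stot A δ (c (K' m x)) x := by
      have hsplit : δ m (A m (c (K' m x))) x + S' m (K' m x) x = Stot A δ (c (K' m x)) x := by
        simp only [hS'def, Stot]
        exact Finset.add_sum_erase _ (fun m' => δ m' (A m' (c (K' m x))) x) (Finset.mem_univ m)
      rw [hδ1'] at hsplit
      linarith
    exact Finset.le_max' _ _ (Finset.mem_filter.2 ⟨hr, hKS⟩)
  -- weights, events and the dominating function
  set w : ι → ℕ → ℝ := fun m k => if 0 < c k then ((M0.card : ℝ) * A m (c k))⁻¹ else 0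
    with hwdef
  have hw0 : ∀ m (k : ℕ), 0 ≤ w m k := by
    intro m k
    rw [hwdef]
    dsimp only
    split
    · exact inv_nonneg.2 (mul_nonneg (Nat.cast_nonneg _) (hAmc_Icc m k).1)
    · exact le_refl 0
  set E : ι → ℕ → Set X := fun m k => {x | K' m x = k} ∩ {x | δ m (A m (c k)) x = 1}
    with hEdef
  set g : X → ℝ := fun x => q * ∑ m ∈ M0, ∑ k ∈ Finset.range (n+1),
    Set.indicator (E m k) (fun _ => w m k) x with hgdef
  have hg0 : ∀ x, 0 ≤ g x := by
    intro x
    refine mul_nonneg hq0 (Finset.sum_nonneg fun m _ => Finset.sum_nonneg fun k _ => ?_)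
    exact Set.indicator_nonneg (fun _ _ => hw0 m k) x
  -- pointwise bound
  have hpt : ∀ x ∈ G, Fprop M0 A δ (alphaStar A δ q x) x ≤ g x := by
    intro x hx
    rw [hstar x hx, Fprop]
    by_cases hS : 0 < Stot A δ (c (K x)) x
    swap
    · rw [if_neg hS]; exact hg0 x
    rw [if_pos hS]
    rcases Finset.eq_empty_or_nonempty M0 with hM0 | hM0
    · rw [Szero, hM0]
      simpa using hg0 x
    have hcard : 0 < (M0.card : ℝ) := by exact_mod_cast Finset.card_pos.2 hM0
    have hKQ := Finset.mem_filter.1 (hKmem x)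
    have hKS : (K x : ℝ) ≤ Stot A δ (c (K x)) x := hKQ.2
    have hSAle : SA (c (K x)) ≤ q * Stot A δ (c (K x)) x :=
      le_trans (hcmem (K x)).2 (mul_le_mul_of_nonneg_left hKS hq0)
    have hSApos' : 0 < SA (c (K x)) := by
      by_contra h
      push_neg at h
      have h0 : SA (c (K x)) = 0 := le_antisymm h (hSAnonneg _ (hcmem _).1)
      have hc0 : c (K x) = 0 := by
        by_contra hc
        have := hSApos _ (hcmem (K x)).1 (lt_of_le_of_ne (hcmem (K x)).1.1 (Ne.symm hc))
        linarith
      have hz : Stot A δ (c (K x)) x = 0 := by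
        rw [hc0, Stot]
        exact Finset.sum_eq_zero fun m _ => by rw [(hA1 m).1, hx.2 m]
      linarith
    have hcpos : 0 < c (K x) := by
      by_contra h
      push_neg at h
      have hc0 : c (K x) = 0 := le_antisymm h (hcmem (K x)).1.1
      rw [hc0, hSA0] at hSApos'
      exact lt_irrefl _ hSApos'
    have hZnonneg : 0 ≤ Szero M0 A δ (c (K x)) x :=
      Finset.sum_nonneg fun m _ => (hδ01 m _ (hAmc_Icc m (K x)) x).1
    have step1 : Szero M0 A δ (c (K x)) x / Stot A δ (c (K x)) x
        ≤ q * (Szero M0 A δ (c (K x)) x / SA (c (K x))) := by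
      rw [mul_div_assoc', div_le_div_iff₀ hS hSApos']
      calc Szero M0 A δ (c (K x)) x * SA (c (K x))
          ≤ Szero M0 A δ (c (K x)) x * (q * Stot A δ (c (K x)) x) :=
            mul_le_mul_of_nonneg_left hSAle hZnonneg
        _ = q * Szero M0 A δ (c (K x)) x * Stot A δ (c (K x)) x := by ring
    have step2 : Szero M0 A δ (c (K x)) x / SA (c (K x))
        = ∑ m ∈ M0, δ m (A m (c (K x))) x / SA (c (K x)) := by
      rw [Szero, Finset.sum_div]
    have step3 : ∀ m ∈ M0, δ m (A m (c (K x))) x / SA (c (K x))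
        ≤ ∑ k ∈ Finset.range (n+1), Set.indicator (E m k) (fun _ => w m k) x := by
      intro m hm
      rcases hvals m _ (hAmc_Icc m (K x)) x with hδ0 | hδ1
      · rw [hδ0, zero_div]
        exact Finset.sum_nonneg fun k _ => Set.indicator_nonneg (fun _ _ => hw0 m k) x
      · have hK'x : K' m x = K x := hL1 x hx m hδ1
        have hxE : x ∈ E m (K x) := ⟨hK'x, hδ1⟩
        have hApos' : 0 < A m (c (K x)) := hApos m (K x) hcpos
        have hterm : Set.indicator (E m (K x)) (fun _ => w m (K x)) x
            = ((M0.card : ℝ) * A m (c (K x)))⁻¹ := by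
          rw [Set.indicator_of_mem hxE, hwdef]
          exact if_pos hcpos
        have hbound : δ m (A m (c (K x))) x / SA (c (K x))
            ≤ ((M0.card : ℝ) * A m (c (K x)))⁻¹ := by
          rw [hδ1, inv_eq_one_div]
          refine one_div_le_one_div_of_le (mul_pos hcard hApos') ?_
          exact hA4 (c (K x)) (hcmem (K x)).1 m hm
        calc δ m (A m (c (K x))) x / SA (c (K x))
            ≤ ((M0.card : ℝ) * A m (c (K x)))⁻¹ := hbound
          _ = Set.indicator (E m (K x)) (fun _ => w m (K x)) x := hterm.symm
          _ ≤ ∑ k ∈ Finset.range (n+1), Set.indicator (E m k) (fun _ => w m k) x :=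
            Finset.single_le_sum
              (fun k _ => Set.indicator_nonneg (fun _ _ => hw0 m k) x) hKQ.1
    calc Szero M0 A δ (c (K x)) x / Stot A δ (c (K x)) x
        ≤ q * (Szero M0 A δ (c (K x)) x / SA (c (K x))) := step1
      _ = q * ∑ m ∈ M0, δ m (A m (c (K x))) x / SA (c (K x)) := by rw [step2]
      _ ≤ g x := by
          rw [hgdef]
          exact mul_le_mul_of_nonneg_left (Finset.sum_le_sum step3) hq0
  -- nonnegativity of the FDP
  have halphaIcc : ∀ x, alphaStar A δ q x ∈ Set.Icc (0:ℝ) 1 := by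
    intro x
    have hub : ∀ β ∈ insert (0:ℝ) {α ∈ Set.Icc (0:ℝ) 1 | ∑ m, A m α ≤ q * Stot A δ α x},
        β ≤ 1 := by
      rintro β (rfl | hβ)
      · norm_num
      · exact hβ.1.2
    constructor
    · exact le_csSup ⟨1, hub⟩ (Set.mem_insert _ _)
    · exact csSup_le (Set.insert_nonempty _ _) hub
  have hF0 : ∀ x, 0 ≤ Fprop M0 A δ (alphaStar A δ q x) x := by
    intro x
    rw [Fprop]
    split
    · refine div_nonneg (Finset.sum_nonneg fun m _ => ?_) (le_of_lt (by assumption))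
      exact (hδ01 m _ (hArange m _ (halphaIcc x)) x).1
    · exact le_refl 0
  -- measurability
  have hprocle : ∀ m', procSigma (δ m') ≤ ‹MeasurableSpace X› := by
    intro m'
    rw [procSigma]
    exact iSup₂_le fun α hα => measurable_iff_comap_le.1 (hmeas m' α hα)
  have hcomap_le_proc : ∀ m', ∀ t ∈ Set.Icc (0:ℝ) 1,
      MeasurableSpace.comap (δ m' t) Real.measurableSpace ≤ procSigma (δ m') := by
    intro m' t ht
    rw [procSigma]
    exact le_iSup₂ (f := fun α (_ : α ∈ Set.Icc (0:ℝ) 1) =>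
      MeasurableSpace.comap (δ m' α) Real.measurableSpace) t ht
  set 𝒢 : ι → MeasurableSpace X := fun m => ⨆ m' ∈ Finset.univ.erase m, procSigma (δ m')
    with h𝒢def
  have h𝒢le : ∀ m, 𝒢 m ≤ ‹MeasurableSpace X› := fun m => iSup₂_le fun m' _ => hprocle m'
  have hδ𝒢meas : ∀ m m', m' ≠ m → ∀ t ∈ Set.Icc (0:ℝ) 1, Measurable[𝒢 m] (δ m' t) := by
    intro m m' hm' t ht
    have h1 : Measurable[MeasurableSpace.comap (δ m' t) Real.measurableSpace] (δ m' t) :=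
      Measurable.of_comap_le le_rfl
    refine h1.mono (le_trans (hcomap_le_proc m' t ht) ?_) le_rfl
    exact le_iSup₂ (f := fun m'' (_ : m'' ∈ Finset.univ.erase m) => procSigma (δ m'')) m'
      (Finset.mem_erase.2 ⟨hm', Finset.mem_univ m'⟩)
  have hS'meas : ∀ m (j : ℕ), Measurable[𝒢 m] (fun x => S' m j x) := by
    intro m j
    simp only [hS'def]
    refine Finset.measurable_sum _ fun m' hm' => ?_
    exact hδ𝒢meas m m' (Finset.mem_erase.1 hm').1 _ (hAmc_Icc m' j)
  have hK'iff : ∀ m x (k : ℕ), k ∈ Finset.range (n+1) →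
      (K' m x = k ↔ ((k:ℝ) ≤ S' m k x + 1 ∧
        ∀ j ∈ Finset.range (n+1), k < j → S' m j x + 1 < (j:ℝ))) := by
    intro m x k hk
    constructor
    · rintro rfl
      have hmem := Finset.max'_mem (Q' m x) (hQ'ne m x)
      obtain ⟨h1, h2⟩ := Finset.mem_filter.1 hmem
      refine ⟨h2, ?_⟩
      intro j hj hlt
      by_contra hcon
      push_neg at hcon
      have hjQ : j ∈ Q' m x := Finset.mem_filter.2 ⟨hj, hcon⟩
      exact absurd (Finset.le_max' _ _ hjQ) (not_le.2 hlt)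
    · rintro ⟨h1, h2⟩
      have hkQ : k ∈ Q' m x := Finset.mem_filter.2 ⟨hk, h1⟩
      refine le_antisymm ?_ (Finset.le_max' _ _ hkQ)
      by_contra hcon
      push_neg at hcon
      have hmem := Finset.max'_mem (Q' m x) (hQ'ne m x)
      obtain ⟨hr, hs⟩ := Finset.mem_filter.1 hmem
      exact absurd hs (not_le.2 (h2 _ hr hcon))
  have hK'set : ∀ m (k : ℕ), k ∈ Finset.range (n+1) →
      {x | K' m x = k} = {x | (k:ℝ) ≤ S' m k x + 1} ∩
        ⋂ j ∈ (Finset.range (n+1)).filter (fun j => k < j), {x | S' m j x + 1 < (j:ℝ)} := by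
    intro m k hk
    ext x
    simp only [Set.mem_inter_iff, Set.mem_setOf_eq, Set.mem_iInter, Finset.mem_filter]
    rw [hK'iff m x k hk]
    constructor
    · rintro ⟨a, b⟩; exact ⟨a, fun j hj => b j hj.1 hj.2⟩
    · rintro ⟨a, b⟩; exact ⟨a, fun j hj hlt => b j ⟨hj, hlt⟩⟩
  have hK'measG : ∀ m (k : ℕ), k ∈ Finset.range (n+1) →
      MeasurableSet[𝒢 m] {x | K' m x = k} := by
    intro m k hk
    rw [hK'set m k hk]
    refine MeasurableSet.inter ?_ (Finset.measurableSet_biInter _ fun j hj => ?_)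
    · exact measurableSet_le measurable_const ((hS'meas m k).add_const 1)
    · exact measurableSet_lt ((hS'meas m j).add_const 1) measurable_const
  have hK'meas : ∀ m (k : ℕ), k ∈ Finset.range (n+1) → MeasurableSet {x | K' m x = k} :=
    fun m k hk => h𝒢le m _ (hK'measG m k hk)
  have hDmeas : ∀ m (k : ℕ), MeasurableSet {x | δ m (A m (c k)) x = 1} := by
    intro m k
    have heq : {x | δ m (A m (c k)) x = 1} = (δ m (A m (c k))) ⁻¹' {1} := by
      ext x; simp
    rw [heq]
    exact (hmeas m _ (hAmc_Icc m k)) (measurableSet_singleton 1)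
  have hEmeas : ∀ m (k : ℕ), k ∈ Finset.range (n+1) → MeasurableSet (E m k) :=
    fun m k hk => (hK'meas m k hk).inter (hDmeas m k)
  -- independence
  have hindep : ∀ m ∈ M0, Indep (procSigma (δ m)) (𝒢 m) P := by
    intro m hm
    have hab : Indep (procSigma (δ m)) (⨆ m' ∈ M0.erase m, procSigma (δ m')) P := by
      have h := indep_iSup_of_disjoint (m := fun i : {m' // m' ∈ M0} => procSigma (δ (i:ι)))
        (fun i => hprocle _) hD3b (S := {(⟨m, hm⟩ : {m' // m' ∈ M0})})
        (T := {(⟨m, hm⟩ : {m' // m' ∈ M0})}ᶜ) disjoint_compl_right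
      have hl : (⨆ i ∈ ({(⟨m, hm⟩ : {m' // m' ∈ M0})} : Set {m' // m' ∈ M0}),
          procSigma (δ (i:ι))) = procSigma (δ m) := by simp
      have hr : (⨆ i ∈ ({(⟨m, hm⟩ : {m' // m' ∈ M0})}ᶜ : Set {m' // m' ∈ M0}),
          procSigma (δ (i:ι))) = ⨆ m' ∈ M0.erase m, procSigma (δ m') := by
        apply le_antisymm
        · refine iSup₂_le fun i hi => ?_
          have hne : (i:ι) ∈ M0.erase m :=
            Finset.mem_erase.2 ⟨fun h => hi (Subtype.ext h), i.2⟩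
          exact le_iSup₂ (f := fun m' (_ : m' ∈ M0.erase m) => procSigma (δ m')) _ hne
        · refine iSup₂_le fun m' hm' => ?_
          obtain ⟨hne, hmem⟩ := Finset.mem_erase.1 hm'
          refine le_iSup₂ (f := fun (i : {m' // m' ∈ M0})
            (_ : i ∈ ({(⟨m, hm⟩ : {m' // m' ∈ M0})}ᶜ : Set _)) =>
            procSigma (δ (i:ι))) ⟨m', hmem⟩ ?_
          simp only [Set.mem_compl_iff, Set.mem_singleton_iff]
          exact fun h => hne (congrArg Subtype.val h)
      rwa [hl, hr] at h
    have hsup : procSigma (δ m) ⊔ (⨆ m' ∈ M0.erase m, procSigma (δ m'))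
        = ⨆ m' ∈ M0, procSigma (δ m') := by
      conv_rhs => rw [← Finset.insert_erase hm]
      rw [Finset.iSup_insert]
    have habc : Indep (procSigma (δ m) ⊔ (⨆ m' ∈ M0.erase m, procSigma (δ m')))
        (⨆ m' ∈ M1, procSigma (δ m')) P := by rw [hsup]; exact hD3a
    have h𝒢eq : 𝒢 m = (⨆ m' ∈ M0.erase m, procSigma (δ m'))
        ⊔ (⨆ m' ∈ M1, procSigma (δ m')) := by
      have hmM1 : m ∉ M1 := fun h => (Finset.disjoint_left.1 hdisj hm) h
      have hms : Finset.univ.erase m = (M0.erase m) ∪ M1 := by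
        ext m'
        simp only [Finset.mem_erase, Finset.mem_union, Finset.mem_univ, and_true]
        constructor
        · intro hne
          have hmem : m' ∈ M0 ∪ M1 := hpart ▸ Finset.mem_univ m'
          rcases Finset.mem_union.1 hmem with h | h
          · exact Or.inl ⟨hne, h⟩
          · exact Or.inr h
        · rintro (⟨hne, _⟩ | h)
          · exact hne
          · exact fun heq => hmM1 (heq ▸ h)
      rw [h𝒢def]
      dsimp only
      rw [hms, Finset.iSup_union]
    rw [h𝒢eq]
    exact indep_group' P (hprocle m) (iSup₂_le fun m' _ => hprocle m')
      (iSup₂_le fun m' _ => hprocle m') hab habc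
  -- the probability of a rejection at a deterministic threshold
  have hPδ : ∀ m ∈ M0, ∀ k : ℕ, (P {x | δ m (A m (c k)) x = 1}).toReal = A m (c k) := by
    intro m hm k
    have hI := hD4 m hm _ (hAmc_Icc m k)
    have hind : ∀ x, δ m (A m (c k)) x
        = Set.indicator {x | δ m (A m (c k)) x = 1} (fun _ => (1:ℝ)) x := by
      intro x
      rcases hvals m _ (hAmc_Icc m k) x with h | h
      · have hx : x ∉ {x | δ m (A m (c k)) x = 1} := by
          simp only [Set.mem_setOf_eq, h]
          norm_num
        rw [Set.indicator_of_notMem hx, h]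
      · have hx : x ∈ {x | δ m (A m (c k)) x = 1} := h
        rw [Set.indicator_of_mem hx]
        exact h
    have hcalc : ∫ x, δ m (A m (c k)) x ∂P = (P {x | δ m (A m (c k)) x = 1}).toReal := by
      rw [integral_congr_ae (Filter.Eventually.of_forall hind),
        integral_indicator_const (1:ℝ) (hDmeas m k), smul_eq_mul, mul_one, measureReal_def]
    exact hcalc.symm.trans hI
  -- independence applied to the events
  have hPE : ∀ m ∈ M0, ∀ k ∈ Finset.range (n+1),
      P (E m k) = P {x | K' m x = k} * P {x | δ m (A m (c k)) x = 1} := by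
    intro m hm k hk
    have h := hindep m hm
    rw [Indep_iff] at h
    have hD : MeasurableSet[procSigma (δ m)] {x | δ m (A m (c k)) x = 1} := by
      have h1 : MeasurableSet[MeasurableSpace.comap (δ m (A m (c k))) Real.measurableSpace]
          {x | δ m (A m (c k)) x = 1} := ⟨{1}, measurableSet_singleton 1, by ext x; simp⟩
      exact hcomap_le_proc m _ (hAmc_Icc m k) _ h1
    have hres := h _ _ hD (hK'measG m k hk)
    rw [hEdef]
    dsimp only
    rw [Set.inter_comm, hres, mul_comm]
  -- integrability of g
  have hindic : ∀ m (k : ℕ), k ∈ Finset.range (n+1) →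
      Integrable (fun x => Set.indicator (E m k) (fun _ => w m k) x) P :=
    fun m k hk => (integrable_const (w m k)).indicator (hEmeas m k hk)
  have hg_int : Integrable g P := by
    rw [hgdef]
    exact Integrable.const_mul (integrable_finset_sum _
      (fun m _ => integrable_finset_sum _ (fun k hk => hindic m k hk))) q
  -- the value of the integral of g
  have hgeq : ∫ x, g x ∂P = q * ∑ m ∈ M0, ∑ k ∈ Finset.range (n+1),
      (P (E m k)).toReal * w m k := by
    rw [hgdef]
    dsimp only
    rw [integral_const_mul]
    congr 1
    rw [integral_finset_sum _ (fun m _ => integrable_finset_sum _ (fun k hk => hindic m k hk))]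
    refine Finset.sum_congr rfl fun m _ => ?_
    rw [integral_finset_sum _ (fun k hk => hindic m k hk)]
    refine Finset.sum_congr rfl fun k hk => ?_
    rw [integral_indicator_const (w m k) (hEmeas m k hk), smul_eq_mul, measureReal_def]
  -- final bound on the sum
  have hsum_le : ∑ m ∈ M0, ∑ k ∈ Finset.range (n+1), (P (E m k)).toReal * w m k ≤ 1 := by
    rcases Finset.eq_empty_or_nonempty M0 with hM0 | hM0
    · rw [hM0]; norm_num
    have hcard : 0 < (M0.card : ℝ) := by exact_mod_cast Finset.card_pos.2 hM0
    have hterm : ∀ m ∈ M0, ∑ k ∈ Finset.range (n+1), (P (E m k)).toReal * w m k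
        ≤ (M0.card : ℝ)⁻¹ := by
      intro m hm
      have hPsum : ∑ k ∈ Finset.range (n+1), (P {x | K' m x = k}).toReal ≤ 1 := by
        have hdisj' : Set.PairwiseDisjoint (↑(Finset.range (n+1)))
            (fun k => {x | K' m x = k}) := by
          intro i _ j _ hij
          refine Set.disjoint_left.2 fun x h1 h2 => hij ?_
          exact (h1 : K' m x = i).symm.trans (h2 : K' m x = j)
        have hmeq : ∑ k ∈ Finset.range (n+1), P {x | K' m x = k}
            = P (⋃ k ∈ Finset.range (n+1), {x | K' m x = k}) :=
          (measure_biUnion_finset hdisj' (fun k hk => hK'meas m k hk)).symm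
        calc ∑ k ∈ Finset.range (n+1), (P {x | K' m x = k}).toReal
            = (∑ k ∈ Finset.range (n+1), P {x | K' m x = k}).toReal :=
              (ENNReal.toReal_sum (fun k _ => measure_ne_top P _)).symm
          _ = (P (⋃ k ∈ Finset.range (n+1), {x | K' m x = k})).toReal := by rw [hmeq]
          _ ≤ (1 : ENNReal).toReal := ENNReal.toReal_mono ENNReal.one_ne_top prob_le_one
          _ = 1 := by simp
      have hstep : ∀ k ∈ Finset.range (n+1), (P (E m k)).toReal * w m k
          ≤ (M0.card : ℝ)⁻¹ * (P {x | K' m x = k}).toReal := by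
        intro k hk
        by_cases hck : 0 < c k
        · have hA' : 0 < A m (c k) := hApos m k hck
          have hPEk : (P (E m k)).toReal = (P {x | K' m x = k}).toReal * A m (c k) := by
            rw [hPE m hm k hk, ENNReal.toReal_mul, hPδ m hm k]
          have hwk : w m k = ((M0.card : ℝ) * A m (c k))⁻¹ := by
            rw [hwdef]; exact if_pos hck
          rw [hPEk, hwk]
          rw [mul_inv]
          have : (P {x | K' m x = k}).toReal * A m (c k) * ((M0.card : ℝ)⁻¹ * (A m (c k))⁻¹)
              = (M0.card : ℝ)⁻¹ * (P {x | K' m x = k}).toReal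
                * (A m (c k) * (A m (c k))⁻¹) := by ring
          rw [this, mul_inv_cancel₀ (ne_of_gt hA'), mul_one]
        · have hwk : w m k = 0 := by rw [hwdef]; exact if_neg hck
          rw [hwk, mul_zero]
          positivity
      calc ∑ k ∈ Finset.range (n+1), (P (E m k)).toReal * w m k
          ≤ ∑ k ∈ Finset.range (n+1), (M0.card : ℝ)⁻¹ * (P {x | K' m x = k}).toReal :=
            Finset.sum_le_sum hstep
        _ = (M0.card : ℝ)⁻¹ * ∑ k ∈ Finset.range (n+1), (P {x | K' m x = k}).toReal :=
            (Finset.mul_sum _ _ _).symm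
        _ ≤ (M0.card : ℝ)⁻¹ * 1 := by
            exact mul_le_mul_of_nonneg_left hPsum (inv_nonneg.2 (le_of_lt hcard))
        _ = (M0.card : ℝ)⁻¹ := mul_one _
    calc ∑ m ∈ M0, ∑ k ∈ Finset.range (n+1), (P (E m k)).toReal * w m k
        ≤ ∑ _m ∈ M0, (M0.card : ℝ)⁻¹ := Finset.sum_le_sum hterm
      _ = (M0.card : ℝ) * (M0.card : ℝ)⁻¹ := by
          rw [Finset.sum_const, nsmul_eq_mul]
      _ = 1 := mul_inv_cancel₀ (ne_of_gt hcard)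
  -- conclusion
  calc ∫ x, Fprop M0 A δ (alphaStar A δ q x) x ∂P
      ≤ ∫ x, g x ∂P :=
        integral_mono_of_nonneg (Filter.Eventually.of_forall hF0) hg_int (hGae.mono hpt)
    _ = q * ∑ m ∈ M0, ∑ k ∈ Finset.range (n+1), (P (E m k)).toReal * w m k := hgeq
    _ ≤ q * 1 := mul_le_mul_of_nonneg_left hsum_le hq0
    _ = q := mul_one q

end
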